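/- (Mehler's lemma.) For all natural numbers m and n, E[he_m(X) · he_n(Y)] = ρ^n if m = n, and E[he_m(X) · he_n(Y)] = 0 if m ≠ n. -/

import Mathlib

open MeasureTheory ProbabilityTheory

/-- The normalized (probabilists') Hermite polynomial `he_k(x) = hermite_k(x) / √(k!)`. -/
noncomputable def normalizedHermite (k : ℕ) (x : ℝ) : ℝ :=
  Polynomial.aeval x (Polynomial.hermite k) / Real.sqrt (Nat.factorial k)

namespace Mehler
open Polynomial Real Filter
open scoped ENNReal NNReal


theorem derivative_hermite (n : ℕ) :
    derivative (hermite (n+1)) = (n+1 : ℤ) • hermite n := by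
  induction n with
  | zero => simp [hermite_succ, hermite_zero]
  | succ n ih =>
    have h2 : derivative (hermite (n+1+1)) =
        hermite (n+1) + X * derivative (hermite (n+1)) - derivative (derivative (hermite (n+1))) := by
      rw [hermite_succ (n+1)]
      rw [derivative_sub, derivative_mul, derivative_X, one_mul]
    rw [h2, ih, derivative_smul]
    have : X * (↑n + 1 : ℤ) • hermite n - (↑n + 1 : ℤ) • derivative (hermite n)
        = (↑n + 1 : ℤ) • hermite (n+1) := by
      rw [hermite_succ n, smul_sub, mul_smul_comm]
    rw [add_sub_assoc, this]
    push_cast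
    module



theorem integrable_poly_gauss (p : ℝ[X]) :
    Integrable (fun x : ℝ => eval x p * Real.exp (-(x^2)/2)) := by
  induction p using Polynomial.induction_on' with
  | add p q hp hq =>
    simpa [eval_add, add_mul] using (hp.add hq : Integrable (fun x : ℝ => eval x p * Real.exp (-(x^2)/2) + eval x q * Real.exp (-(x^2)/2)))
  | monomial n a =>
    have h := integrable_rpow_mul_exp_neg_mul_sq (b := 1/2) (by norm_num)
      (s := (n : ℝ)) (by exact_mod_cast neg_one_lt_zero.trans_le (Nat.cast_nonneg n))
    have h2 : Integrable (fun x : ℝ => x ^ n * Real.exp (-(x^2)/2)) := by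
      refine h.congr (ae_of_all _ fun x => ?_)
      show x ^ (n:ℝ) * rexp (-(1/2) * x^2) = _
      rw [Real.rpow_natCast]
      ring_nf
    simpa [eval_monomial, mul_assoc] using h2.const_mul a

theorem tendsto_poly_gauss_atTop (p : ℝ[X]) :
    Tendsto (fun x : ℝ => eval x p * Real.exp (-(x^2)/2)) atTop (nhds 0) := by
  have key : ∀ n : ℕ, Tendsto (fun x : ℝ => x ^ n * Real.exp (-(x^2)/2)) atTop (nhds 0) := by
    intro n
    have h := rpow_mul_exp_neg_mul_sq_isLittleO_exp_neg (b := 1/2) (by norm_num) (n : ℝ)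
    have hexp : Tendsto (fun x : ℝ => Real.exp (-(1/2) * x)) atTop (nhds 0) := by
      refine Real.tendsto_exp_atBot.comp ?_
      exact Tendsto.const_mul_atTop_of_neg (by norm_num) tendsto_id
    have h2 := h.trans_tendsto hexp
    refine h2.congr' ?_
    filter_upwards [eventually_ge_atTop (0:ℝ)] with x _
    show x ^ (n:ℝ) * rexp (-(1/2) * x^2) = _
    rw [Real.rpow_natCast]
    ring_nf
  have : Tendsto (fun x : ℝ => ∑ i ∈ Finset.range (p.natDegree + 1),
      p.coeff i * (x ^ i * Real.exp (-(x^2)/2))) atTop (nhds 0) := by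
    have := tendsto_finset_sum (Finset.range (p.natDegree + 1))
      (fun i _ => ((key i).const_mul (p.coeff i)))
    simpa using this
  refine this.congr (fun x => ?_)
  rw [eval_eq_sum_range, Finset.sum_mul]
  congr 1; ext i; ring

theorem tendsto_poly_gauss_atBot (p : ℝ[X]) :
    Tendsto (fun x : ℝ => eval x p * Real.exp (-(x^2)/2)) atBot (nhds 0) := by
  have h := tendsto_poly_gauss_atTop (p.comp (-X))
  have := h.comp tendsto_neg_atBot_atTop
  refine this.congr (fun x => ?_)
  simp [Function.comp, eval_comp]




theorem hasDerivAt_poly_gauss (p : ℝ[X]) (x : ℝ) :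
    HasDerivAt (fun y : ℝ => eval y p * Real.exp (-(y^2)/2))
      (eval x (derivative p - X * p) * Real.exp (-(x^2)/2)) x := by
  have h1 : HasDerivAt (fun y : ℝ => eval y p) (eval x (derivative p)) x := p.hasDerivAt x
  have h2 : HasDerivAt (fun y : ℝ => Real.exp (-(y^2)/2)) (-x * Real.exp (-(x^2)/2)) x := by
    have hq : HasDerivAt (fun y : ℝ => -(y^2)/2) (-x) x := by
      have := ((hasDerivAt_pow 2 x).neg).div_const 2
      simpa using this.congr_deriv (by push_cast; ring)
    simpa [mul_comm] using hq.exp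
  have this : HasDerivAt (fun y : ℝ => eval y p * Real.exp (-(y^2)/2)) _ x := h1.mul h2
  convert this using 1
  simp [eval_sub, eval_mul]
  ring

theorem integral_poly_gauss_deriv (p : ℝ[X]) :
    ∫ x : ℝ, eval x (derivative p - X * p) * Real.exp (-(x^2)/2) = 0 := by
  set g : ℝ → ℝ := fun x => eval x (derivative p - X * p) * Real.exp (-(x^2)/2) with hg
  have hint := integrable_poly_gauss (derivative p - X * p)
  have hIic : ∫ x in Set.Iic (0:ℝ), g x = eval 0 p * Real.exp (-(0^2)/2) - 0 :=
    integral_Iic_of_hasDerivAt_of_tendsto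
      (hasDerivAt_poly_gauss p 0).continuousAt.continuousWithinAt
      (fun x _ => hasDerivAt_poly_gauss p x) hint.integrableOn (tendsto_poly_gauss_atBot p)
  have hIoi : ∫ x in Set.Ioi (0:ℝ), g x = 0 - eval 0 p * Real.exp (-(0^2)/2) :=
    integral_Ioi_of_hasDerivAt_of_tendsto
      (hasDerivAt_poly_gauss p 0).continuousAt.continuousWithinAt
      (fun x _ => hasDerivAt_poly_gauss p x) hint.integrableOn (tendsto_poly_gauss_atTop p)
  have := intervalIntegral.integral_Iic_add_Ioi (b := (0:ℝ)) hint.integrableOn hint.integrableOn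
  rw [← this, hIic, hIoi]
  ring

theorem gaussianPDFReal_zero_one (x : ℝ) :
    gaussianPDFReal 0 1 x = (Real.sqrt (2*π))⁻¹ * Real.exp (-(x^2)/2) := by
  rw [gaussianPDFReal]
  norm_num

theorem integral_gaussianReal (f : ℝ → ℝ) :
    ∫ x, f x ∂(gaussianReal 0 1)
      = ∫ x, ((Real.sqrt (2*π))⁻¹ * Real.exp (-(x^2)/2)) * f x := by
  rw [gaussianReal_of_var_ne_zero 0 one_ne_zero]
  have hd : (gaussianPDF 0 1) = fun x => ((Real.toNNReal (gaussianPDFReal 0 1 x) : ℝ≥0) : ℝ≥0∞) := by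
    ext x; rw [gaussianPDF_def]; rfl
  rw [hd, integral_withDensity_eq_integral_smul
    ((measurable_gaussianPDFReal 0 1).real_toNNReal) f]
  congr 1
  ext x
  rw [NNReal.smul_def, smul_eq_mul, Real.coe_toNNReal _ (gaussianPDFReal_nonneg 0 1 x),
    gaussianPDFReal_zero_one]

theorem integrable_poly_gaussianReal (p : ℝ[X]) :
    Integrable (fun x => eval x p) (gaussianReal 0 1) := by
  rw [gaussianReal_of_var_ne_zero 0 one_ne_zero]
  have hd : (gaussianPDF 0 1) = fun x => ((Real.toNNReal (gaussianPDFReal 0 1 x) : ℝ≥0) : ℝ≥0∞) := by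
    ext x; rw [gaussianPDF_def]; rfl
  rw [hd]
  refine (integrable_withDensity_iff_integrable_smul
    ((measurable_gaussianPDFReal 0 1).real_toNNReal) (g := fun x => eval x p)).mpr ?_
  have : Integrable (fun x : ℝ => (Real.sqrt (2*π))⁻¹ * (eval x p * Real.exp (-(x^2)/2))) :=
    (integrable_poly_gauss p).const_mul _
  refine this.congr (ae_of_all _ fun x => ?_)
  show _ = (gaussianPDFReal 0 1 x).toNNReal • eval x p
  rw [NNReal.smul_def, smul_eq_mul, Real.coe_toNNReal _ (gaussianPDFReal_nonneg 0 1 x),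
    gaussianPDFReal_zero_one]
  ring

theorem ibp (p : ℝ[X]) :
    ∫ x, eval x (X * p) ∂(gaussianReal 0 1) = ∫ x, eval x (derivative p) ∂(gaussianReal 0 1) := by
  have h1 := integrable_poly_gaussianReal (derivative p - X * p)
  have h2 : ∫ x, eval x (derivative p - X * p) ∂(gaussianReal 0 1) = 0 := by
    rw [integral_gaussianReal]
    have : ∫ x, ((Real.sqrt (2*π))⁻¹ * Real.exp (-(x^2)/2)) * eval x (derivative p - X * p)
        = (Real.sqrt (2*π))⁻¹ * ∫ x, eval x (derivative p - X * p) * Real.exp (-(x^2)/2) := by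
      rw [← integral_const_mul]
      congr 1; ext x; ring
    rw [this, integral_poly_gauss_deriv, mul_zero]
  have h3 : ∫ x, (eval x (derivative p) - eval x (X * p)) ∂(gaussianReal 0 1) = 0 := by
    refine Eq.trans ?_ h2
    congr 1; ext x; rw [eval_sub]
  rw [integral_sub (integrable_poly_gaussianReal _) (integrable_poly_gaussianReal _)] at h3
  linarith




/-- integral of a polynomial against the standard gaussian -/
noncomputable def intg (p : ℝ[X]) : ℝ := ∫ x, eval x p ∂(gaussianReal 0 1)

theorem intg_add (p q : ℝ[X]) : intg (p + q) = intg p + intg q := by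
  unfold intg
  rw [← integral_add (integrable_poly_gaussianReal p) (integrable_poly_gaussianReal q)]
  congr 1; ext x; rw [eval_add]

theorem intg_sub (p q : ℝ[X]) : intg (p - q) = intg p - intg q := by
  unfold intg
  rw [← integral_sub (integrable_poly_gaussianReal p) (integrable_poly_gaussianReal q)]
  congr 1; ext x; rw [eval_sub]

theorem intg_const_mul (a : ℝ) (p : ℝ[X]) : intg (C a * p) = a * intg p := by
  unfold intg
  rw [← integral_const_mul]
  congr 1; ext x; rw [eval_mul, eval_C]

theorem intg_one : intg 1 = 1 := by
  unfold intg
  simp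

theorem intg_ibp (p : ℝ[X]) : intg (X * p) = intg (derivative p) := ibp p

/-- real-coefficient hermite polynomial -/
noncomputable def Hr (n : ℕ) : ℝ[X] := (hermite n).map (Int.castRingHom ℝ)

theorem aeval_eq_eval_Hr (t : ℝ) (n : ℕ) : (aeval t (hermite n) : ℝ) = eval t (Hr n) := by
  rw [Hr, eval_map, aeval_def]
  rfl

theorem Hr_zero : Hr 0 = 1 := by simp [Hr]

theorem Hr_succ (n : ℕ) : Hr (n+1) = X * Hr n - derivative (Hr n) := by
  rw [Hr, hermite_succ, Polynomial.map_sub, Polynomial.map_mul, map_X, ← derivative_map]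
  rfl

theorem derivative_Hr (n : ℕ) : derivative (Hr (n+1)) = C ((n : ℝ)+1) * Hr n := by
  rw [Hr, derivative_map, derivative_hermite]
  rw [zsmul_eq_mul, Polynomial.map_mul]
  congr 1
  · simp [Polynomial.map_intCast]


theorem proj (c s : ℝ) (hs : s^2 = 1 - c^2) (n : ℕ) (x : ℝ) :
    intg ((Hr n).comp (C (c*x) + C s * X)) = c^n * eval x (Hr n) := by
  induction n using Nat.strong_induction_on with
  | _ n IH =>
    match n with
    | 0 => simp [Hr_zero, intg_one]
    | Nat.succ n =>
      set u : ℝ[X] := C (c*x) + C s * X with hu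
      have hdu : derivative u = C s := by simp [hu]
      have hcomp : (Hr (n+1)).comp u
          = C (c*x) * (Hr n).comp u + C s * (X * (Hr n).comp u) - (derivative (Hr n)).comp u := by
        rw [Hr_succ, sub_comp, mul_comp, X_comp]
        ring
      have hderivq : derivative ((Hr n).comp u) = C s * (derivative (Hr n)).comp u := by
        rw [derivative_comp, hdu]
      have key : intg ((Hr (n+1)).comp u)
          = c*x * intg ((Hr n).comp u) + (s^2 - 1) * intg ((derivative (Hr n)).comp u) := by
        rw [hcomp, intg_sub, intg_add, intg_const_mul, intg_const_mul, intg_ibp, hderivq,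
          intg_const_mul]
        ring
      have hIn := IH n (Nat.lt_succ_self n)
      match n with
      | 0 =>
        have h0 : (derivative (Hr 0)).comp u = 0 := by
          rw [Hr_zero, derivative_one, zero_comp]
        have hz : intg (0 : ℝ[X]) = 0 := by simp [intg]
        rw [key, hIn, h0, hz, Hr_zero, Hr_succ, Hr_zero, derivative_one]
        simp
      | Nat.succ m =>
        have hIm := IH m (by omega)
        have hd : (derivative (Hr (m+1))).comp u = C ((m:ℝ)+1) * (Hr m).comp u := by
          rw [derivative_Hr, mul_comp, C_comp]
        rw [key, hIn, hd, intg_const_mul, hIm, hs]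
        have hev : eval x (Hr (m+1+1)) = x * eval x (Hr (m+1)) - ((m:ℝ)+1) * eval x (Hr m) := by
          rw [Hr_succ, eval_sub, eval_mul, eval_X, derivative_Hr, eval_mul, eval_C]
        rw [hev]
        simp only [Nat.succ_eq_add_one]
        ring

theorem intg_Hr (m : ℕ) : intg (Hr m) = if m = 0 then 1 else 0 := by
  have h := proj 0 1 (by norm_num) m 0
  have he : (Hr m).comp (C ((0:ℝ)*0) + C 1 * X) = Hr m := by
    simp
  rw [he] at h
  rw [h]
  rcases Nat.eq_zero_or_pos m with hm | hm
  · subst hm; simp [Hr_zero]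
  · rw [zero_pow (by omega)]
    simp [if_neg (by omega : ¬ m = 0)]

theorem orth (n : ℕ) : ∀ m : ℕ, intg (Hr n * Hr m) = if n = m then (n.factorial : ℝ) else 0 := by
  induction n with
  | zero =>
    intro m
    rw [Hr_zero, one_mul, intg_Hr]
    simp [eq_comm]
  | succ n IH =>
    intro m
    have h1 : Hr (n+1) * Hr m = X * (Hr n * Hr m) - derivative (Hr n) * Hr m := by
      rw [Hr_succ]; ring
    rw [h1, intg_sub, intg_ibp, derivative_mul, intg_add, add_sub_cancel_left]
    match m with
    | 0 =>
      rw [Hr_zero, derivative_one, mul_zero]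
      simp [intg]
    | Nat.succ k =>
      have : Hr n * derivative (Hr (k+1)) = C ((k:ℝ)+1) * (Hr n * Hr k) := by
        rw [derivative_Hr]; ring
      rw [this, intg_const_mul, IH k]
      by_cases hnk : n = k
      · subst hnk
        rw [if_pos rfl, if_pos rfl, Nat.factorial_succ]
        push_cast
        ring
      · rw [if_neg hnk, if_neg (by omega)]
        ring





theorem intg_sum {ι : Type*} (t : Finset ι) (f : ι → ℝ[X]) :
    intg (∑ j ∈ t, f j) = ∑ j ∈ t, intg (f j) := by
  unfold intg
  rw [← integral_finset_sum t (fun j _ => integrable_poly_gaussianReal (f j))]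
  congr 1; ext x; rw [eval_finset_sum]

section Main

variable (c s : ℝ) (n : ℕ)

/-- bivariate expansion polynomial: coefficients (in the outer variable `z`) are
polynomials in `x`. -/
noncomputable def Q : (ℝ[X])[X] := aeval (Polynomial.C (Polynomial.C c * X) + Polynomial.C (Polynomial.C s) * X) (hermite n)

theorem expansion (x z : ℝ) :
    (aeval (c*x + s*z) (hermite n) : ℝ)
      = ∑ j ∈ Finset.range ((Q c s n).natDegree + 1), eval x ((Q c s n).coeff j) * z^j := by
  set φ : (ℝ[X])[X] →ₐ[ℤ] ℝ := (eval₂RingHom (evalRingHom x) z).toIntAlgHom with hφdef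
  have h1 : eval₂ (evalRingHom x) z (Q c s n) = aeval (c*x + s*z) (hermite n) := by
    have : eval₂ (evalRingHom x) z (Q c s n) = φ (Q c s n) := rfl
    have hu : φ (C (C c * X) + C (C s) * X) = c*x + s*z := by
      show eval₂ (evalRingHom x) z _ = _
      simp [eval₂_add, eval₂_mul, eval₂_C, eval₂_X]
    rw [this, Q, ← Polynomial.aeval_algHom_apply φ, hu]
  rw [← h1, eval₂_eq_sum_range]
  rfl


theorem Rpoly (hs : s^2 = 1-c^2) :
    (∑ j ∈ Finset.range ((Q c s n).natDegree + 1), C (intg (X^j)) * (Q c s n).coeff j)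
      = C (c^n) * Hr n := by
  apply Polynomial.funext
  intro x
  have hpoly : (Hr n).comp (C (c*x) + C s * X)
      = ∑ j ∈ Finset.range ((Q c s n).natDegree + 1), C (eval x ((Q c s n).coeff j)) * X^j := by
    apply Polynomial.funext
    intro z
    rw [eval_comp]
    simp only [eval_add, eval_mul, eval_C, eval_X]
    rw [← aeval_eq_eval_Hr, expansion c s n x z]
    rw [eval_finset_sum]
    simp [eval_mul, eval_pow]
  have h2 : intg ((Hr n).comp (C (c*x) + C s * X))
      = ∑ j ∈ Finset.range ((Q c s n).natDegree + 1), eval x ((Q c s n).coeff j) * intg (X^j) := by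
    rw [hpoly, intg_sum]
    refine Finset.sum_congr rfl (fun j _ => ?_)
    rw [intg_const_mul]
  have h3 := proj c s hs n x
  rw [h2] at h3
  rw [eval_finset_sum]
  simp only [eval_mul, eval_C]
  rw [← h3]
  refine Finset.sum_congr rfl (fun j _ => ?_)
  ring

theorem integrable_term (p : ℝ[X]) (j : ℕ) :
    Integrable (fun ω : ℝ×ℝ => eval ω.1 p * ω.2^j)
      ((gaussianReal 0 1).prod (gaussianReal 0 1)) := by
  have := (integrable_poly_gaussianReal p).mul_prod (integrable_poly_gaussianReal (X^j))
  refine this.congr (ae_of_all _ fun ω => ?_)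
  simp

theorem main_integral (hs : s^2 = 1-c^2) (m : ℕ) :
    (∫ ω : ℝ×ℝ, (aeval ω.1 (hermite m) : ℝ) * (aeval (c*ω.1 + s*ω.2) (hermite n) : ℝ)
        ∂((gaussianReal 0 1).prod (gaussianReal 0 1)))
      = c^n * (if m = n then (m.factorial : ℝ) else 0) := by
  set N := (Q c s n).natDegree + 1 with hN
  have hpt : ∀ ω : ℝ×ℝ, (aeval ω.1 (hermite m) : ℝ) * aeval (c*ω.1 + s*ω.2) (hermite n)
      = ∑ j ∈ Finset.range N, eval ω.1 (Hr m * (Q c s n).coeff j) * ω.2^j := by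
    intro ω
    rw [aeval_eq_eval_Hr, expansion c s n ω.1 ω.2, Finset.mul_sum]
    refine Finset.sum_congr rfl (fun j _ => ?_)
    rw [eval_mul]
    ring
  rw [integral_congr_ae (ae_of_all _ hpt)]
  rw [integral_finset_sum _ (fun j _ => integrable_term (Hr m * (Q c s n).coeff j) j)]
  have hterm : ∀ j, (∫ ω : ℝ×ℝ, eval ω.1 (Hr m * (Q c s n).coeff j) * ω.2^j
      ∂((gaussianReal 0 1).prod (gaussianReal 0 1)))
      = intg (Hr m * (Q c s n).coeff j) * intg (X^j) := by
    intro j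
    rw [integral_prod_mul (f := fun x => eval x (Hr m * (Q c s n).coeff j)) (g := fun z => z^j)]
    congr 1
    unfold intg
    congr 1; ext z; simp
  simp only [hterm]
  have hsum : ∑ j ∈ Finset.range N, intg (Hr m * (Q c s n).coeff j) * intg (X^j)
      = intg (∑ j ∈ Finset.range N, C (intg (X^j)) * (Hr m * (Q c s n).coeff j)) := by
    rw [intg_sum]
    refine Finset.sum_congr rfl (fun j _ => ?_)
    rw [intg_const_mul]
    ring
  rw [hsum]
  have hfact : (∑ j ∈ Finset.range N, C (intg (X^j)) * (Hr m * (Q c s n).coeff j))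
      = C (c^n) * (Hr m * Hr n) := by
    have : (∑ j ∈ Finset.range N, C (intg (X^j)) * (Hr m * (Q c s n).coeff j))
        = Hr m * ∑ j ∈ Finset.range N, C (intg (X^j)) * (Q c s n).coeff j := by
      rw [Finset.mul_sum]
      refine Finset.sum_congr rfl (fun j _ => ?_)
      ring
    rw [this, Rpoly c s n hs]
    ring
  rw [hfact, intg_const_mul, orth m n]

end Main


end Mehler

open Polynomial in
/-- Mehler's lemma: for a bivariate standard Gaussian pair `(X, Y)` with correlation `ρ`,
`E[he_m(X) he_n(Y)] = ρ^n δ_{mn}`. Here `X ω = ω.1`, `Z ω = ω.2` are independent standard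
Gaussians and `Y = ρ X + √(1-ρ²) Z`. -/
theorem mehler_lemma (ρ : ℝ) (hρ : ρ ∈ Set.Icc (-1 : ℝ) 1) (m n : ℕ) :
    (∫ ω : ℝ × ℝ,
        normalizedHermite m ω.1 *
          normalizedHermite n (ρ * ω.1 + Real.sqrt (1 - ρ ^ 2) * ω.2)
        ∂((gaussianReal 0 1).prod (gaussianReal 0 1))) =
    if m = n then ρ ^ n else 0 := by
  have h1 : (0:ℝ) ≤ 1 - ρ^2 := by nlinarith [hρ.1, hρ.2]
  have hs : (Real.sqrt (1-ρ^2))^2 = 1 - ρ^2 := Real.sq_sqrt h1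
  have key := Mehler.main_integral ρ (Real.sqrt (1-ρ^2)) n hs m
  have hpt : ∀ ω : ℝ×ℝ,
      normalizedHermite m ω.1 * normalizedHermite n (ρ*ω.1 + Real.sqrt (1-ρ^2)*ω.2)
      = (Real.sqrt m.factorial * Real.sqrt n.factorial)⁻¹ *
        ((aeval ω.1 (hermite m) : ℝ) *
          (aeval (ρ*ω.1 + Real.sqrt (1-ρ^2)*ω.2) (hermite n) : ℝ)) := by
    intro ω
    unfold normalizedHermite
    rw [mul_inv]
    ring
  rw [integral_congr_ae (ae_of_all _ hpt), integral_const_mul, key]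
  by_cases h : m = n
  · subst h
    rw [if_pos rfl, if_pos rfl]
    have hfac : Real.sqrt m.factorial * Real.sqrt m.factorial = (m.factorial : ℝ) :=
      Real.mul_self_sqrt (by positivity)
    rw [hfac]
    have : (m.factorial : ℝ) ≠ 0 := by positivity
    field_simp
  · rw [if_neg h, if_neg h, mul_zero, mul_zero]
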